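/- Let α ∈ (0,1), β ∈ (0,1), q₀ ∈ [1,∞), L₁ ∈ (0,1), and let ξ₁ : ℝ² → [0,∞) and ξ₂ : ℝ⁴ → [0,∞) be continuous. Assume D_pH satisfies: (i) |D_pH(t,x,p,(I,α₁)#ρ) − D_pH(t,x,p,(I,α₂)#ρ)| ≤ L₁‖α₁−α₂‖_{L^{q₀}(ρ)} for every subprobability measure ρ on cl(Ω) and bounded continuous α₁, α₂; (ii) |D_pH(t,x,p,(I,a)#ρ₁) − D_pH(t,x,p,(I,a)#ρ₂)| ≤ d*(ρ₁,ρ₂)^β ξ₁(|p|, ‖a‖_∞); (iii) |D_pH(t,x,p₁,μ₁) − D_pH(s,y,p₂,μ₂)| ≤ (|p₁−p₂|^β + |x−y|^β + |t−s|^{β/2}) ξ₂(|p₁|,|p₂|,Λ_∞(μ₁),Λ_∞(μ₂)). Let ũ with D_xũ ∈ C^{α/2,α}(Q;ℝⁿ), let m ∈ C^{α/2,α}(Q) with m ≥ 0 and ∫_Ω m(t,·) dx ≤ 1 for all t, and let h : Q → ℝⁿ be continuous and bounded satisfying h(t,x) = D_pH(t,x, D_xũ(t,x), (I, h(t,·))#(m(t,·)dx))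 for all (t,x) ∈ Q. Then h ∈ C^{αβ/2,αβ}(Q;ℝⁿ), and ‖h‖_{C^{αβ/2,αβ}(Q)} ≤ C (‖D_xũ‖_{C^{α/2,α}(Q)}^β + ‖m‖_{C^{α/2,α}(Q)}^β + 1), where C depends only on L₁, α, β, Ω, and the suprema of ξ₁ and ξ₂ on the compact ranges determined by sup|D_xũ| and sup|h|. -/

import Mathlib

open Set MeasureTheory Filter
open scoped RealInnerProductSpace ENNReal Topology

noncomputable section

namespace MFG

/-- Euclidean space `ℝⁿ`. -/
abbrev Euc (n : ℕ) := EuclideanSpace ℝ (Fin n)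

variable {n : ℕ}

/-- The pushforward `(I,α)#m` of a measure `m` under `x ↦ (x, α x)`. -/
def pushfwd (m : Measure (Euc n)) (α : Euc n → Euc n) : Measure (Euc n × Euc n) :=
  Measure.map (fun x => (x, α x)) m

/-- `Λ_q(μ) = (∫ |α|^q dμ(x,α))^{1/q}`. -/
def LambdaQ (q : ℝ) (μ : Measure (Euc n × Euc n)) : ℝ :=
  (∫ z, ‖z.2‖ ^ q ∂μ) ^ (1 / q)

/-- `Λ_∞(μ)`: the smallest `R ≥ 0` such that `μ` is supported in `{|α| ≤ R}`. -/
def LambdaInf (μ : Measure (Euc n × Euc n)) : ℝ :=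
  sInf {R : ℝ | 0 ≤ R ∧ μ {z : Euc n × Euc n | R < ‖z.2‖} = 0}

/-- `L^q(ρ)` norm of a vector field. -/
def LqNormV (q : ℝ) (ρ : Measure (Euc n)) (f : Euc n → Euc n) : ℝ :=
  (∫ x, ‖f x‖ ^ q ∂ρ) ^ (1 / q)

/-- `L^q(ρ)` norm of a scalar function. -/
def LqNormR (q : ℝ) (ρ : Measure (Euc n)) (f : Euc n → ℝ) : ℝ :=
  (∫ x, |f x| ^ q ∂ρ) ^ (1 / q)

/-- The bounded-Lipschitz metric `d*` on measures on `cl(Ω) × ℝⁿ`. -/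
def dstar (μ ν : Measure (Euc n × Euc n)) : ℝ :=
  sSup {r : ℝ | ∃ φ : Euc n × Euc n → ℝ, LipschitzWith 1 φ ∧ (∀ z, |φ z| ≤ 1) ∧
    r = (∫ z, φ z ∂μ) - ∫ z, φ z ∂ν}

/-- The bounded-Lipschitz metric `d*` on measures on `cl(Ω)`. -/
def dstarX (μ ν : Measure (Euc n)) : ℝ :=
  sSup {r : ℝ | ∃ φ : Euc n → ℝ, LipschitzWith 1 φ ∧ (∀ z, |φ z| ≤ 1) ∧
    r = (∫ z, φ z ∂μ) - ∫ z, φ z ∂ν}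

/-- The measure `f dx` on `Ω` with Lebesgue density `f`. -/
def densMeas (Ω : Set (Euc n)) (f : Euc n → ℝ) : Measure (Euc n) :=
  (volume.restrict Ω).withDensity fun x => ENNReal.ofReal (f x)

/-- `∂_t u`. -/
def pderivT (u : ℝ → Euc n → ℝ) (t : ℝ) (x : Euc n) : ℝ :=
  deriv (fun s => u s x) t

/-- `D_x u`, the spatial gradient. -/
def spaceGrad (u : ℝ → Euc n → ℝ) (t : ℝ) (x : Euc n) : Euc n :=
  gradient (u t) x

/-- The Laplacian of a function on `ℝⁿ`. -/
def lapl (f : Euc n → ℝ) (x : Euc n) : ℝ :=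
  ∑ i : Fin n, fderiv ℝ (fun y => fderiv ℝ f y (EuclideanSpace.single i 1)) x
    (EuclideanSpace.single i 1)

/-- The (spatial) divergence of a vector field on `ℝⁿ`. -/
def divg (F : Euc n → Euc n) (x : Euc n) : ℝ :=
  ∑ i : Fin n, fderiv ℝ (fun y => F y i) x (EuclideanSpace.single i 1)

/-- `u ∈ C^{1,2}(Q)`: continuous on `Q = [0,T] × cl(Ω)`, once differentiable in time,
twice in space. -/
def C12 (T : ℝ) (Ω : Set (Euc n)) (u : ℝ → Euc n → ℝ) : Prop :=
  ContinuousOn (fun z : ℝ × Euc n => u z.1 z.2) (Icc 0 T ×ˢ closure Ω) ∧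
  ∀ t ∈ Icc (0:ℝ) T, ∀ x ∈ closure Ω,
    DifferentiableAt ℝ (fun s => u s x) t ∧ ContDiffAt ℝ 2 (u t) x

/-- `sup_Q v`. -/
def supQ (T : ℝ) (Ω : Set (Euc n)) (v : ℝ → Euc n → ℝ) : ℝ :=
  sSup ((fun z : ℝ × Euc n => v z.1 z.2) '' (Icc 0 T ×ˢ closure Ω))

/-- `sup_{cl Ω} v`. -/
def supX (Ω : Set (Euc n)) (v : Euc n → ℝ) : ℝ :=
  sSup (v '' closure Ω)

/-- `N` is the outward unit normal vector field on `∂Ω`. -/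
def OutwardNormal (Ω : Set (Euc n)) (N : Euc n → Euc n) : Prop :=
  ∀ x ∈ frontier Ω, ‖N x‖ = 1 ∧
    ∀ᶠ s : ℝ in 𝓝[>] (0:ℝ), x + s • N x ∉ closure Ω ∧ x - s • N x ∈ Ω

/-- `Θ_θ(μ)`: pushforward of `μ` under `(x,α) ↦ (x, α/θ)`. -/
def Theta (θ : ℝ) (μ : Measure (Euc n × Euc n)) : Measure (Euc n × Euc n) :=
  Measure.map (fun z : Euc n × Euc n => (z.1, θ⁻¹ • z.2)) μ

/-- `L^θ(t,x,α,μ) = θ L(t,x,α/θ,Θ_θ(μ))`. -/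
def Ltheta (L : ℝ → Euc n → Euc n → Measure (Euc n × Euc n) → ℝ)
    (θ t : ℝ) (x a : Euc n) (μ : Measure (Euc n × Euc n)) : ℝ :=
  θ * L t x (θ⁻¹ • a) (Theta θ μ)

/-- `H^θ`, the Legendre transform of `L^θ` in the velocity variable. -/
def Htheta (L : ℝ → Euc n → Euc n → Measure (Euc n × Euc n) → ℝ)
    (θ t : ℝ) (x p : Euc n) (μ : Measure (Euc n × Euc n)) : ℝ :=
  ⨆ a : Euc n, (⟪p, a⟫ - Ltheta L θ t x a μ)

/-- Sequential continuity on `[0,T] × cl(Ω) × ℝⁿ × 𝔐_{∞,R}(cl(Ω)×ℝⁿ)` (every `R`),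
the measure argument carrying the metric `d*` (scalar-valued version). -/
def MContR (T : ℝ) (Ω : Set (Euc n))
    (F : ℝ → Euc n → Euc n → Measure (Euc n × Euc n) → ℝ) : Prop :=
  ∀ R > (0:ℝ), ∀ (tk : ℕ → ℝ) (xk pk : ℕ → Euc n)
    (μk : ℕ → Measure (Euc n × Euc n)) (t : ℝ) (x p : Euc n)
    (μ : Measure (Euc n × Euc n)),
    (∀ k, tk k ∈ Icc 0 T) → t ∈ Icc 0 T →
    (∀ k, xk k ∈ closure Ω) → x ∈ closure Ω →
    (∀ k, μk k Set.univ ≤ 1 ∧ μk k {z : Euc n × Euc n | R < ‖z.2‖} = 0) →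
    μ Set.univ ≤ 1 → μ {z : Euc n × Euc n | R < ‖z.2‖} = 0 →
    Tendsto tk atTop (𝓝 t) → Tendsto xk atTop (𝓝 x) → Tendsto pk atTop (𝓝 p) →
    Tendsto (fun k => dstar (μk k) μ) atTop (𝓝 0) →
    Tendsto (fun k => F (tk k) (xk k) (pk k) (μk k)) atTop (𝓝 (F t x p μ))

/-- Sequential continuity (vector-valued version). -/
def MContV (T : ℝ) (Ω : Set (Euc n))
    (F : ℝ → Euc n → Euc n → Measure (Euc n × Euc n) → Euc n) : Prop :=
  ∀ R > (0:ℝ), ∀ (tk : ℕ → ℝ) (xk pk : ℕ → Euc n)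
    (μk : ℕ → Measure (Euc n × Euc n)) (t : ℝ) (x p : Euc n)
    (μ : Measure (Euc n × Euc n)),
    (∀ k, tk k ∈ Icc 0 T) → t ∈ Icc 0 T →
    (∀ k, xk k ∈ closure Ω) → x ∈ closure Ω →
    (∀ k, μk k Set.univ ≤ 1 ∧ μk k {z : Euc n × Euc n | R < ‖z.2‖} = 0) →
    μ Set.univ ≤ 1 → μ {z : Euc n × Euc n | R < ‖z.2‖} = 0 →
    Tendsto tk atTop (𝓝 t) → Tendsto xk atTop (𝓝 x) → Tendsto pk atTop (𝓝 p) →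
    Tendsto (fun k => dstar (μk k) μ) atTop (𝓝 0) →
    Tendsto (fun k => F (tk k) (xk k) (pk k) (μk k)) atTop (𝓝 (F t x p μ))

end MFG

open MFG

namespace Stmt14Aux

open MFG

variable {n : ℕ}

lemma rpow_add_le {a b p : ℝ} (ha : 0 ≤ a) (hb : 0 ≤ b) (hp0 : 0 ≤ p) (hp1 : p ≤ 1) :
    (a + b) ^ p ≤ a ^ p + b ^ p := by
  have h := NNReal.rpow_add_le_add_rpow a.toNNReal b.toNNReal hp0 hp1
  have h' : ((a.toNNReal : ℝ) + (b.toNNReal : ℝ)) ^ p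
      ≤ (a.toNNReal : ℝ) ^ p + (b.toNNReal : ℝ) ^ p := by
    exact_mod_cast h
  simpa [Real.coe_toNNReal a ha, Real.coe_toNNReal b hb] using h'

lemma rpow_split {a A e₁ e₂ : ℝ} (ha : 0 ≤ a) (haA : a ≤ A) (he₁ : 0 ≤ e₁) (he₂ : 0 < e₂) :
    a ^ (e₁ + e₂) ≤ (max 1 A) ^ e₂ * a ^ e₁ := by
  rcases eq_or_lt_of_le ha with h0 | h0
  · rw [← h0, Real.zero_rpow (by positivity : (0:ℝ) < e₁ + e₂).ne']
    positivity
  · rw [Real.rpow_add h0]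
    calc a ^ e₁ * a ^ e₂ ≤ a ^ e₁ * (max 1 A) ^ e₂ := by
          refine mul_le_mul_of_nonneg_left ?_ (Real.rpow_nonneg ha _)
          exact Real.rpow_le_rpow ha (le_max_of_le_right haA) he₂.le
      _ = (max 1 A) ^ e₂ * a ^ e₁ := mul_comm _ _

lemma lq_bound {q : ℝ} (hq : 1 ≤ q) (ρ : Measure (Euc n)) (S : Set (Euc n))
    (hρ1 : ρ Set.univ ≤ 1) (hρS : ρ Sᶜ = 0) (f : Euc n → Euc n) {M : ℝ}
    (hM : 0 ≤ M) (hf : ∀ x ∈ S, ‖f x‖ ≤ M) : LqNormV q ρ f ≤ M := by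
  have hq0 : (0:ℝ) < q := lt_of_lt_of_le one_pos hq
  have hI0 : 0 ≤ ∫ x, ‖f x‖ ^ q ∂ρ :=
    integral_nonneg fun x => Real.rpow_nonneg (norm_nonneg _) q
  have hbd : ∀ᵐ x ∂ρ, ‖f x‖ ^ q ≤ M ^ q := by
    refine ae_iff.2 (measure_mono_null ?_ hρS)
    intro x hx
    simp only [Set.mem_setOf_eq, not_le] at hx
    intro hxS
    exact absurd (Real.rpow_le_rpow (norm_nonneg _) (hf x hxS) hq0.le) (not_le.2 hx)
  have hIle : (∫ x, ‖f x‖ ^ q ∂ρ) ≤ M ^ q := by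
    by_cases hint : Integrable (fun x => ‖f x‖ ^ q) ρ
    · haveI : IsFiniteMeasure ρ := ⟨lt_of_le_of_lt hρ1 ENNReal.one_lt_top⟩
      calc (∫ x, ‖f x‖ ^ q ∂ρ) ≤ ∫ _x, M ^ q ∂ρ :=
            integral_mono_ae hint (integrable_const _) hbd
        _ = (ρ Set.univ).toReal * M ^ q := by rw [integral_const, smul_eq_mul]; rfl
        _ ≤ 1 * M ^ q := by
            have h1 : (ρ Set.univ).toReal ≤ 1 := by
              simpa using ENNReal.toReal_mono (by simp) hρ1
            exact mul_le_mul_of_nonneg_right h1 (Real.rpow_nonneg hM q)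
        _ = M ^ q := one_mul _
    · rw [integral_undef hint]
      exact Real.rpow_nonneg hM q
  have hfin : (∫ x, ‖f x‖ ^ q ∂ρ) ^ (1/q) ≤ (M ^ q) ^ (1/q) :=
    Real.rpow_le_rpow hI0 hIle (by positivity)
  rw [← Real.rpow_mul hM, mul_one_div, div_self hq0.ne', Real.rpow_one] at hfin
  exact hfin

lemma densMeas_compl_null (Ω : Set (Euc n)) (f : Euc n → ℝ) :
    densMeas Ω f ((closure Ω)ᶜ) = 0 := by
  have h0 : (volume.restrict Ω) ((closure Ω)ᶜ) = 0 := by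
    rw [Measure.restrict_apply measurableSet_closure.compl]
    have : (closure Ω)ᶜ ∩ Ω = ∅ := by
      ext x
      simp only [Set.mem_inter_iff, Set.mem_compl_iff, Set.mem_empty_iff_false, iff_false,
        not_and]
      exact fun hxc hxΩ => hxc (subset_closure hxΩ)
    rw [this, measure_empty]
  exact (withDensity_absolutelyContinuous _ _) h0

lemma densMeas_univ_le (Ω : Set (Euc n)) (hΩo : IsOpen Ω) (hΩb : Bornology.IsBounded Ω)
    (f : Euc n → ℝ) (hfc : ContinuousOn f (closure Ω)) {K : ℝ}
    (hfb : ∀ x ∈ closure Ω, |f x| ≤ K) (hf0 : ∀ x ∈ closure Ω, 0 ≤ f x)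
    (hint : (∫ x in Ω, f x) ≤ 1) :
    densMeas Ω f Set.univ ≤ 1 := by
  haveI : IsFiniteMeasure (volume.restrict Ω) :=
    ⟨by rw [Measure.restrict_apply_univ]; exact hΩb.measure_lt_top⟩
  have hfm : AEMeasurable f (volume.restrict Ω) :=
    (hfc.aemeasurable measurableSet_closure).mono_measure
      (Measure.restrict_mono subset_closure le_rfl)
  have hfae : 0 ≤ᵐ[volume.restrict Ω] f := by
    filter_upwards [ae_restrict_mem hΩo.measurableSet] with x hx
    exact hf0 x (subset_closure hx)
  have hKae : ∀ᵐ x ∂(volume.restrict Ω), ‖f x‖ ≤ K := by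
    filter_upwards [ae_restrict_mem hΩo.measurableSet] with x hx
    simpa [Real.norm_eq_abs] using hfb x (subset_closure hx)
  have hfi : Integrable f (volume.restrict Ω) :=
    Integrable.mono' (integrable_const K) hfm.aestronglyMeasurable hKae
  have heq : densMeas Ω f Set.univ = ∫⁻ x, ENNReal.ofReal (f x) ∂(volume.restrict Ω) := by
    rw [densMeas, withDensity_apply _ MeasurableSet.univ, Measure.restrict_univ]
  rw [heq, ← ofReal_integral_eq_lintegral_ofReal hfi hfae]
  calc ENNReal.ofReal (∫ x, f x ∂(volume.restrict Ω)) ≤ ENNReal.ofReal 1 :=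
        ENNReal.ofReal_le_ofReal hint
    _ = 1 := ENNReal.ofReal_one

lemma pushfwd_univ_le (ρ : Measure (Euc n)) (a : Euc n → Euc n) (h1 : ρ Set.univ ≤ 1) :
    pushfwd ρ a Set.univ ≤ 1 := by
  by_cases hm : AEMeasurable (fun x => (x, a x)) ρ
  · rw [pushfwd, Measure.map_apply_of_aemeasurable hm MeasurableSet.univ]
    simpa using h1
  · rw [pushfwd, Measure.map_of_not_aemeasurable hm]
    simp

lemma pushfwd_tail (ρ : Measure (Euc n)) (a : Euc n → Euc n) (S : Set (Euc n))
    (hρS : ρ Sᶜ = 0) {B : ℝ} (hb : ∀ x ∈ S, ‖a x‖ ≤ B) :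
    pushfwd ρ a {z : Euc n × Euc n | B < ‖z.2‖} = 0 := by
  by_cases hm : AEMeasurable (fun x => (x, a x)) ρ
  · rw [pushfwd, Measure.map_apply_of_aemeasurable hm
      (measurableSet_lt measurable_const measurable_snd.norm)]
    refine measure_mono_null ?_ hρS
    intro x hx
    simp only [Set.mem_preimage, Set.mem_setOf_eq] at hx
    exact fun hxS => (not_le.2 hx) (hb x hxS)
  · rw [pushfwd, Measure.map_of_not_aemeasurable hm]
    simp

lemma lambdaInf_mem (μ : Measure (Euc n × Euc n)) {B : ℝ} (hB : 0 ≤ B)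
    (h : μ {z : Euc n × Euc n | B < ‖z.2‖} = 0) : LambdaInf μ ∈ Set.Icc 0 B := by
  constructor
  · exact le_csInf ⟨B, hB, h⟩ fun r hr => hr.1
  · exact csInf_le ⟨0, fun r hr => hr.1⟩ ⟨hB, h⟩

lemma integral_densMeas (Ω : Set (Euc n)) (hΩo : IsOpen Ω)
    (f : Euc n → ℝ) (hfc : ContinuousOn f (closure Ω)) (hf0 : ∀ x ∈ Ω, 0 ≤ f x)
    (φ : Euc n → ℝ) :
    ∫ z, φ z ∂(densMeas Ω f) = ∫ x in Ω, f x * φ x := by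
  have hfm : AEMeasurable (fun x => (f x).toNNReal) (volume.restrict Ω) :=
    ((hfc.aemeasurable measurableSet_closure).mono_measure
      (Measure.restrict_mono subset_closure le_rfl)).real_toNNReal
  have heq : densMeas Ω f
      = (volume.restrict Ω).withDensity (fun x => ((f x).toNNReal : ℝ≥0∞)) := rfl
  rw [heq, integral_withDensity_eq_integral_smul₀ hfm φ]
  refine integral_congr_ae ?_
  filter_upwards [ae_restrict_mem hΩo.measurableSet] with x hx
  simp [NNReal.smul_def, Real.coe_toNNReal _ (hf0 x hx)]

lemma dstarX_bounds (Ω : Set (Euc n)) (hΩo : IsOpen Ω) (hΩb : Bornology.IsBounded Ω)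
    (f g : Euc n → ℝ) (hfc : ContinuousOn f (closure Ω)) (hgc : ContinuousOn g (closure Ω))
    {Kf : ℝ} (hKf : 0 ≤ Kf)
    (hfb : ∀ x ∈ closure Ω, |f x| ≤ Kf) (hgb : ∀ x ∈ closure Ω, |g x| ≤ Kf)
    (hf0 : ∀ x ∈ closure Ω, 0 ≤ f x) (hg0 : ∀ x ∈ closure Ω, 0 ≤ g x)
    {δ : ℝ} (hδ0 : 0 ≤ δ) (hdiff : ∀ x ∈ closure Ω, |f x - g x| ≤ δ) :
    dstarX (densMeas Ω f) (densMeas Ω g) ∈ Set.Icc 0 ((volume Ω).toReal * δ) := by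
  haveI : IsFiniteMeasure (volume.restrict Ω) :=
    ⟨by rw [Measure.restrict_apply_univ]; exact hΩb.measure_lt_top⟩
  have mkint : ∀ (u : Euc n → ℝ), ContinuousOn u (closure Ω) →
      (∀ x ∈ closure Ω, |u x| ≤ Kf) → ∀ (φ : Euc n → ℝ), Continuous φ → (∀ z, |φ z| ≤ 1) →
      Integrable (fun x => u x * φ x) (volume.restrict Ω) := by
    intro u huc hub φ hφc hφ1
    refine Integrable.mono' (integrable_const Kf) ?_ ?_
    · exact (((huc.aemeasurable measurableSet_closure).mono_measure
        (Measure.restrict_mono subset_closure le_rfl)).mul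
        hφc.measurable.aemeasurable).aestronglyMeasurable
    · filter_upwards [ae_restrict_mem hΩo.measurableSet] with x hx
      calc ‖u x * φ x‖ = |u x| * |φ x| := by rw [Real.norm_eq_abs, abs_mul]
        _ ≤ Kf * 1 := mul_le_mul (hub x (subset_closure hx)) (hφ1 x) (abs_nonneg _) hKf
        _ = Kf := mul_one _
  have key : ∀ r ∈ {r : ℝ | ∃ φ : Euc n → ℝ, LipschitzWith 1 φ ∧ (∀ z, |φ z| ≤ 1) ∧
      r = (∫ z, φ z ∂(densMeas Ω f)) - ∫ z, φ z ∂(densMeas Ω g)},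
      r ≤ (volume Ω).toReal * δ := by
    rintro r ⟨φ, hφL, hφ1, rfl⟩
    have hφc : Continuous φ := hφL.continuous
    rw [integral_densMeas Ω hΩo f hfc (fun x hx => hf0 x (subset_closure hx)) φ,
        integral_densMeas Ω hΩo g hgc (fun x hx => hg0 x (subset_closure hx)) φ]
    have hintf := mkint f hfc hfb φ hφc hφ1
    have hintg := mkint g hgc hgb φ hφc hφ1
    rw [← integral_sub hintf hintg]
    calc (∫ x in Ω, (f x * φ x - g x * φ x))
        ≤ ‖∫ x in Ω, (f x * φ x - g x * φ x)‖ := le_abs_self _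
      _ ≤ ∫ x in Ω, ‖f x * φ x - g x * φ x‖ := norm_integral_le_integral_norm _
      _ ≤ ∫ _x in Ω, δ := by
          refine integral_mono_ae (hintf.sub hintg).norm (integrable_const δ) ?_
          filter_upwards [ae_restrict_mem hΩo.measurableSet] with x hx
          calc ‖f x * φ x - g x * φ x‖ = |(f x - g x) * φ x| := by
                rw [Real.norm_eq_abs, ← sub_mul]
            _ = |f x - g x| * |φ x| := abs_mul _ _
            _ ≤ δ * 1 := mul_le_mul (hdiff x (subset_closure hx)) (hφ1 x) (abs_nonneg _) hδ0
            _ = δ := mul_one _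
      _ = (volume Ω).toReal * δ := by
          rw [integral_const]
          show ((volume.restrict Ω) univ).toReal • δ = _
          rw [Measure.restrict_apply_univ, smul_eq_mul]
  constructor
  · refine le_csSup ⟨(volume Ω).toReal * δ, key⟩ ?_
    exact ⟨fun _ => 0, (LipschitzWith.const (0:ℝ)).weaken zero_le_one,
      fun z => by simp, by simp⟩
  · exact Real.sSup_le key (mul_nonneg ENNReal.toReal_nonneg hδ0)

end Stmt14Aux

set_option maxHeartbeats 1000000 in
/-- parabolic Hölder regularity of the fixed-point drift
`h(t,x) = D_pH(t,x,D_xũ(t,x),(I,h(t,·))#(m(t,·)dx))`. -/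
theorem stmt_14
    {n : ℕ} (hn : 1 ≤ n) (T : ℝ) (hT : 0 < T)
    (Ω : Set (Euc n)) (hΩo : IsOpen Ω) (hΩb : Bornology.IsBounded Ω) (hΩne : Ω.Nonempty)
    (αc βc q₀ L₁ : ℝ) (hαc : αc ∈ Ioo (0:ℝ) 1) (hβc : βc ∈ Ioo (0:ℝ) 1)
    (hq₀ : 1 ≤ q₀) (hL₁ : L₁ ∈ Ioo (0:ℝ) 1)
    (ξ₁ : ℝ → ℝ → ℝ) (hξ₁c : Continuous fun z : ℝ × ℝ => ξ₁ z.1 z.2)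
    (hξ₁pos : ∀ s r, 0 ≤ ξ₁ s r)
    (ξ₂ : ℝ → ℝ → ℝ → ℝ → ℝ)
    (hξ₂c : Continuous fun z : ℝ × ℝ × ℝ × ℝ => ξ₂ z.1 z.2.1 z.2.2.1 z.2.2.2)
    (hξ₂pos : ∀ a b c d, 0 ≤ ξ₂ a b c d)
    (DpH : ℝ → Euc n → Euc n → Measure (Euc n × Euc n) → Euc n)
    -- (i) contraction in the control variable
    (hLip : ∀ (s : ℝ) (x pp : Euc n) (ρ : Measure (Euc n)),
      ρ Set.univ ≤ 1 → ρ ((closure Ω)ᶜ) = 0 →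
      ∀ α₁ α₂ : Euc n → Euc n,
        ContinuousOn α₁ (closure Ω) → ContinuousOn α₂ (closure Ω) →
        (∃ C, ∀ y ∈ closure Ω, ‖α₁ y‖ ≤ C) → (∃ C, ∀ y ∈ closure Ω, ‖α₂ y‖ ≤ C) →
        ‖DpH s x pp (pushfwd ρ α₁) - DpH s x pp (pushfwd ρ α₂)‖ ≤
          L₁ * LqNormV q₀ ρ (fun y => α₁ y - α₂ y))
    -- (ii) Hölder continuity in the state marginal
    (hρHold : ∀ (s : ℝ) (x pp : Euc n) (a : Euc n → Euc n) (ρ₁ ρ₂ : Measure (Euc n)),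
      ρ₁ Set.univ ≤ 1 → ρ₂ Set.univ ≤ 1 →
      ρ₁ ((closure Ω)ᶜ) = 0 → ρ₂ ((closure Ω)ᶜ) = 0 →
      ContinuousOn a (closure Ω) → (∃ C, ∀ y ∈ closure Ω, ‖a y‖ ≤ C) →
      ‖DpH s x pp (pushfwd ρ₁ a) - DpH s x pp (pushfwd ρ₂ a)‖ ≤
        dstarX ρ₁ ρ₂ ^ βc * ξ₁ ‖pp‖ (supX Ω (fun y => ‖a y‖)))
    -- (iii) Hölder continuity in `(t,x,p)`
    (hHold : ∀ (t s : ℝ) (x y p₁ p₂ : Euc n) (μ₁ μ₂ : Measure (Euc n × Euc n)),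
      μ₁ Set.univ ≤ 1 → μ₂ Set.univ ≤ 1 →
      ‖DpH t x p₁ μ₁ - DpH s y p₂ μ₂‖ ≤
        (‖p₁ - p₂‖ ^ βc + ‖x - y‖ ^ βc + |t - s| ^ (βc / 2)) *
          ξ₂ ‖p₁‖ ‖p₂‖ (LambdaInf μ₁) (LambdaInf μ₂))
    -- bounds `Bu ≥ sup|D_xũ|`, `Bh ≥ sup|h|` (the compact ranges of `ξ₁, ξ₂`)
    (Bu Bh : ℝ) (hBu : 0 ≤ Bu) (hBh : 0 ≤ Bh) :
    ∃ C : ℝ, 0 < C ∧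
      ∀ (Ku Km : ℝ) (Du : ℝ → Euc n → Euc n) (m : ℝ → Euc n → ℝ)
        (h : ℝ → Euc n → Euc n),
        0 ≤ Ku → 0 ≤ Km →
        -- `D_xũ ∈ C^{α/2,α}(Q;ℝⁿ)` with norm `≤ Ku`, sup bounded by `Bu`
        (∀ t ∈ Icc (0:ℝ) T, ∀ x ∈ closure Ω, ‖Du t x‖ ≤ Bu ∧ ‖Du t x‖ ≤ Ku) →
        (∀ t ∈ Icc (0:ℝ) T, ∀ s ∈ Icc (0:ℝ) T, ∀ x ∈ closure Ω, ∀ y ∈ closure Ω,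
          ‖Du t x - Du s y‖ ≤ Ku * (|t - s| ^ (αc / 2) + ‖x - y‖ ^ αc)) →
        -- `m ∈ C^{α/2,α}(Q)` with norm `≤ Km`, `m ≥ 0`, `∫_Ω m(t) ≤ 1`
        (∀ t ∈ Icc (0:ℝ) T, ∀ x ∈ closure Ω, 0 ≤ m t x ∧ |m t x| ≤ Km) →
        (∀ t ∈ Icc (0:ℝ) T, ∀ s ∈ Icc (0:ℝ) T, ∀ x ∈ closure Ω, ∀ y ∈ closure Ω,
          |m t x - m s y| ≤ Km * (|t - s| ^ (αc / 2) + ‖x - y‖ ^ αc)) →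
        (∀ t ∈ Icc (0:ℝ) T, (∫ x in Ω, m t x) ≤ 1) →
        -- `h` continuous and bounded by `Bh`
        ContinuousOn (fun z : ℝ × Euc n => h z.1 z.2) (Icc 0 T ×ˢ closure Ω) →
        (∀ t ∈ Icc (0:ℝ) T, ∀ x ∈ closure Ω, ‖h t x‖ ≤ Bh) →
        -- the fixed-point equation for `h`
        (∀ t ∈ Icc (0:ℝ) T, ∀ x ∈ closure Ω,
          h t x = DpH t x (Du t x) (pushfwd (densMeas Ω (m t)) (h t))) →
        -- conclusion: `h ∈ C^{αβ/2,αβ}(Q;ℝⁿ)` with the claimed norm bound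
        (∀ t ∈ Icc (0:ℝ) T, ∀ x ∈ closure Ω,
          ‖h t x‖ ≤ C * (Ku ^ βc + Km ^ βc + 1)) ∧
        (∀ t ∈ Icc (0:ℝ) T, ∀ s ∈ Icc (0:ℝ) T, ∀ x ∈ closure Ω, ∀ y ∈ closure Ω,
          ‖h t x - h s y‖ ≤ C * (Ku ^ βc + Km ^ βc + 1) *
            (|t - s| ^ (αc * βc / 2) + ‖x - y‖ ^ (αc * βc))) := by
  obtain ⟨x₀, hx₀⟩ := hΩne
  have hx₀c : x₀ ∈ closure Ω := subset_closure hx₀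
  have hα0 := hαc.1
  have hα1 := hαc.2
  have hβ0 := hβc.1
  have hβ1 := hβc.2
  have hL0 := hL₁.1
  have hLlt := hL₁.2
  have hL' : (0:ℝ) < 1 - L₁ := by linarith
  have hdiam : ∀ x ∈ closure Ω, ∀ y ∈ closure Ω, ‖x - y‖ ≤ Metric.diam (closure Ω) := by
    intro x hx y hy
    rw [← dist_eq_norm]
    exact Metric.dist_le_diam_of_mem hΩb.closure hx hy
  set CΩ : ℝ := (max 1 (Metric.diam (closure Ω))) ^ (βc * (1 - αc)) with hCΩdef
  set CT : ℝ := (max 1 T) ^ (βc * (1 - αc) / 2) with hCTdef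
  set CV : ℝ := (max 1 ((volume Ω).toReal)) ^ βc with hCVdef
  have hCΩ0 : 0 ≤ CΩ := Real.rpow_nonneg (le_trans zero_le_one (le_max_left _ _)) _
  have hCT0 : 0 ≤ CT := Real.rpow_nonneg (le_trans zero_le_one (le_max_left _ _)) _
  have hCV0 : 0 ≤ CV := Real.rpow_nonneg (le_trans zero_le_one (le_max_left _ _)) _
  set M₂ : ℝ := sSup ((fun z : ℝ × ℝ × ℝ × ℝ => ξ₂ z.1 z.2.1 z.2.2.1 z.2.2.2) ''
    (Icc (0:ℝ) Bu ×ˢ Icc (0:ℝ) Bu ×ˢ Icc (0:ℝ) Bh ×ˢ Icc (0:ℝ) Bh)) with hM₂def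
  have hM₂bdd : BddAbove ((fun z : ℝ × ℝ × ℝ × ℝ => ξ₂ z.1 z.2.1 z.2.2.1 z.2.2.2) ''
      (Icc (0:ℝ) Bu ×ˢ Icc (0:ℝ) Bu ×ˢ Icc (0:ℝ) Bh ×ˢ Icc (0:ℝ) Bh)) :=
    ((isCompact_Icc.prod (isCompact_Icc.prod (isCompact_Icc.prod
      isCompact_Icc)))).bddAbove_image hξ₂c.continuousOn
  have hM₂le : ∀ a b c d : ℝ, a ∈ Icc (0:ℝ) Bu → b ∈ Icc (0:ℝ) Bu → c ∈ Icc (0:ℝ) Bh →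
      d ∈ Icc (0:ℝ) Bh → ξ₂ a b c d ≤ M₂ := by
    intro a b c d ha hb hc hd
    exact le_csSup hM₂bdd ⟨(a, b, c, d), ⟨ha, hb, hc, hd⟩, rfl⟩
  have hM₂0 : 0 ≤ M₂ := le_trans (hξ₂pos 0 0 0 0)
    (hM₂le 0 0 0 0 ⟨le_rfl, hBu⟩ ⟨le_rfl, hBu⟩ ⟨le_rfl, hBh⟩ ⟨le_rfl, hBh⟩)
  set M₁ : ℝ := sSup ((fun z : ℝ × ℝ => ξ₁ z.1 z.2) ''
    (Icc (0:ℝ) Bu ×ˢ Icc (0:ℝ) Bh)) with hM₁def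
  have hM₁bdd : BddAbove ((fun z : ℝ × ℝ => ξ₁ z.1 z.2) '' (Icc (0:ℝ) Bu ×ˢ Icc (0:ℝ) Bh)) :=
    (isCompact_Icc.prod isCompact_Icc).bddAbove_image hξ₁c.continuousOn
  have hM₁le : ∀ a b : ℝ, a ∈ Icc (0:ℝ) Bu → b ∈ Icc (0:ℝ) Bh → ξ₁ a b ≤ M₁ := by
    intro a b ha hb
    exact le_csSup hM₁bdd ⟨(a, b), ⟨ha, hb⟩, rfl⟩
  have hM₁0 : 0 ≤ M₁ := le_trans (hξ₁pos 0 0) (hM₁le 0 0 ⟨le_rfl, hBu⟩ ⟨le_rfl, hBh⟩)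
  set N : ℝ := M₂ * (1 + CΩ + CT) + M₁ * CV + Bh + 1 with hNdef
  have hN0 : (0:ℝ) < N := by
    have h1 : 0 ≤ M₂ * (1 + CΩ + CT) := mul_nonneg hM₂0 (by linarith)
    have h2 : 0 ≤ M₁ * CV := mul_nonneg hM₁0 hCV0
    rw [hNdef]; linarith
  refine ⟨N / (1 - L₁), div_pos hN0 hL', ?_⟩
  intro Ku Km Du m h hKu hKm hDub hDuH hmb hmH hmint hhc hhb hfix
  have hP0 : 0 ≤ Ku ^ βc := Real.rpow_nonneg hKu _
  have hQ0 : 0 ≤ Km ^ βc := Real.rpow_nonneg hKm _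
  have hone : (1:ℝ) ≤ Ku ^ βc + Km ^ βc + 1 := by linarith
  have hhslice : ∀ t ∈ Icc (0:ℝ) T, ContinuousOn (h t) (closure Ω) := by
    intro t ht
    have h1 : ContinuousOn ((fun z : ℝ × Euc n => h z.1 z.2) ∘ (fun x : Euc n => (t, x)))
        (closure Ω) :=
      hhc.comp (continuous_const.prodMk continuous_id).continuousOn (fun x hx => ⟨ht, hx⟩)
    exact h1
  have hmslice : ∀ t ∈ Icc (0:ℝ) T, ContinuousOn (m t) (closure Ω) := by
    intro t ht x hx
    have hkey : ∀ y ∈ closure Ω, |m t y - m t x| ≤ Km * ‖y - x‖ ^ αc := by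
      intro y hy
      have h1 := hmH t ht t ht y hy x hx
      simpa [Real.zero_rpow (by positivity : (0:ℝ) < αc / 2).ne'] using h1
    have hc1 : ContinuousAt (fun r : ℝ => Km * r ^ αc) 0 :=
      continuousAt_const.mul (Real.continuousAt_rpow_const 0 αc (Or.inr hα0.le))
    have hc2 : Tendsto (fun y : Euc n => ‖y - x‖) (𝓝[closure Ω] x) (𝓝 0) := by
      have h1 : Tendsto (fun y : Euc n => ‖y - x‖) (𝓝 x) (𝓝 ‖x - x‖) :=
        ((continuous_id.sub continuous_const).norm.tendsto x)
      simpa using h1.mono_left nhdsWithin_le_nhds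
    have h1 : Tendsto (fun y : Euc n => Km * ‖y - x‖ ^ αc) (𝓝[closure Ω] x) (𝓝 0) := by
      have h2 := hc1.tendsto.comp hc2
      simpa [Function.comp_def, Real.zero_rpow hα0.ne'] using h2
    have hg : Tendsto (fun y => m t y - m t x) (𝓝[closure Ω] x) (𝓝 0) := by
      refine squeeze_zero_norm' ?_ h1
      filter_upwards [self_mem_nhdsWithin] with y hy
      simpa [Real.norm_eq_abs] using hkey y hy
    have h3 := hg.add (tendsto_const_nhds (x := m t x))
    have h4 : Tendsto (fun y => m t y) (𝓝[closure Ω] x) (𝓝 (m t x)) := by simpa using h3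
    exact h4
  have hρ1 : ∀ t ∈ Icc (0:ℝ) T, MFG.densMeas Ω (m t) Set.univ ≤ 1 := fun t ht =>
    Stmt14Aux.densMeas_univ_le Ω hΩo hΩb (m t) (hmslice t ht)
      (fun x hx => (hmb t ht x hx).2) (fun x hx => (hmb t ht x hx).1) (hmint t ht)
  have hρc : ∀ t : ℝ, MFG.densMeas Ω (m t) ((closure Ω)ᶜ) = 0 := fun t =>
    Stmt14Aux.densMeas_compl_null Ω (m t)
  have hμ1 : ∀ t ∈ Icc (0:ℝ) T, ∀ s ∈ Icc (0:ℝ) T,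
      MFG.pushfwd (MFG.densMeas Ω (m t)) (h s) Set.univ ≤ 1 := fun t ht s hs =>
    Stmt14Aux.pushfwd_univ_le _ _ (hρ1 t ht)
  have hΛ : ∀ t ∈ Icc (0:ℝ) T, ∀ s ∈ Icc (0:ℝ) T,
      MFG.LambdaInf (MFG.pushfwd (MFG.densMeas Ω (m t)) (h s)) ∈ Icc (0:ℝ) Bh :=
    fun t ht s hs =>
    Stmt14Aux.lambdaInf_mem _ hBh (Stmt14Aux.pushfwd_tail _ _ (closure Ω) (hρc t) (hhb s hs))
  have hsupX : ∀ s ∈ Icc (0:ℝ) T, MFG.supX Ω (fun y => ‖h s y‖) ∈ Icc (0:ℝ) Bh := by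
    intro s hs
    rw [Set.mem_Icc, MFG.supX]
    constructor
    · refine le_trans (norm_nonneg (h s x₀)) ?_
      refine le_csSup ⟨Bh, ?_⟩ (Set.mem_image_of_mem _ hx₀c)
      rintro r ⟨y, hy, rfl⟩
      exact hhb s hs y hy
    · refine Real.sSup_le ?_ hBh
      rintro r ⟨y, hy, rfl⟩
      exact hhb s hs y hy
  have key : ∀ t ∈ Icc (0:ℝ) T, ∀ s ∈ Icc (0:ℝ) T, ∀ x ∈ closure Ω, ∀ y ∈ closure Ω,
      ‖h t x - h s y‖ ≤ N / (1 - L₁) * (Ku ^ βc + Km ^ βc + 1) *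
        (|t - s| ^ (αc * βc / 2) + ‖x - y‖ ^ (αc * βc)) := by
    intro t ht s hs
    have hdT0 : 0 ≤ |t - s| ^ (αc * βc / 2) := Real.rpow_nonneg (abs_nonneg _) _
    have eT : (|t - s| ^ (αc / 2)) ^ βc = |t - s| ^ (αc * βc / 2) := by
      rw [← Real.rpow_mul (abs_nonneg _)]
      congr 1
      ring
    have htsT : |t - s| ≤ T := by
      rw [abs_sub_le_iff]
      constructor <;> linarith [ht.1, ht.2, hs.1, hs.2]
    set Sts : ℝ := sSup ((fun z => ‖h t z - h s z‖) '' closure Ω) with hStsdef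
    have hStsbdd : BddAbove ((fun z => ‖h t z - h s z‖) '' closure Ω) := by
      refine ⟨Bh + Bh, ?_⟩
      rintro r ⟨z, hz, rfl⟩
      exact (norm_sub_le _ _).trans (add_le_add (hhb t ht z hz) (hhb s hs z hz))
    have hStsle : ∀ z ∈ closure Ω, ‖h t z - h s z‖ ≤ Sts := fun z hz =>
      le_csSup hStsbdd (Set.mem_image_of_mem _ hz)
    have hSts0 : 0 ≤ Sts := (norm_nonneg _).trans (hStsle x₀ hx₀c)
    have T23 : ∀ x ∈ closure Ω, ∀ y ∈ closure Ω, ‖h t x - h s y‖ ≤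
        (Ku ^ βc * (|t - s| ^ (αc * βc / 2) + ‖x - y‖ ^ (αc * βc))
          + CT * |t - s| ^ (αc * βc / 2) + CΩ * ‖x - y‖ ^ (αc * βc)) * M₂
        + L₁ * Sts + CV * Km ^ βc * |t - s| ^ (αc * βc / 2) * M₁ := by
      intro x hx y hy
      have hdX0 : 0 ≤ ‖x - y‖ ^ (αc * βc) := Real.rpow_nonneg (norm_nonneg _) _
      have eX : (‖x - y‖ ^ αc) ^ βc = ‖x - y‖ ^ (αc * βc) := by
        rw [← Real.rpow_mul (norm_nonneg _)]
      have e1 : ‖h t x - h s y‖ ≤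
          ‖DpH t x (Du t x) (MFG.pushfwd (MFG.densMeas Ω (m t)) (h t))
            - DpH s y (Du s y) (MFG.pushfwd (MFG.densMeas Ω (m t)) (h t))‖
          + ‖DpH s y (Du s y) (MFG.pushfwd (MFG.densMeas Ω (m t)) (h t))
            - DpH s y (Du s y) (MFG.pushfwd (MFG.densMeas Ω (m t)) (h s))‖
          + ‖DpH s y (Du s y) (MFG.pushfwd (MFG.densMeas Ω (m t)) (h s))
            - DpH s y (Du s y) (MFG.pushfwd (MFG.densMeas Ω (m s)) (h s))‖ := by
        rw [hfix t ht x hx, hfix s hs y hy]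
        have h1 := dist_triangle4
          (DpH t x (Du t x) (MFG.pushfwd (MFG.densMeas Ω (m t)) (h t)))
          (DpH s y (Du s y) (MFG.pushfwd (MFG.densMeas Ω (m t)) (h t)))
          (DpH s y (Du s y) (MFG.pushfwd (MFG.densMeas Ω (m t)) (h s)))
          (DpH s y (Du s y) (MFG.pushfwd (MFG.densMeas Ω (m s)) (h s)))
        simpa [dist_eq_norm] using h1
      have hT1 : ‖DpH t x (Du t x) (MFG.pushfwd (MFG.densMeas Ω (m t)) (h t))
            - DpH s y (Du s y) (MFG.pushfwd (MFG.densMeas Ω (m t)) (h t))‖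
          ≤ (Ku ^ βc * (|t - s| ^ (αc * βc / 2) + ‖x - y‖ ^ (αc * βc))
            + CT * |t - s| ^ (αc * βc / 2) + CΩ * ‖x - y‖ ^ (αc * βc)) * M₂ := by
        refine le_trans (hHold t s x y (Du t x) (Du s y) _ _ (hμ1 t ht t ht) (hμ1 t ht t ht)) ?_
        have hξle : ξ₂ ‖Du t x‖ ‖Du s y‖
            (MFG.LambdaInf (MFG.pushfwd (MFG.densMeas Ω (m t)) (h t)))
            (MFG.LambdaInf (MFG.pushfwd (MFG.densMeas Ω (m t)) (h t))) ≤ M₂ :=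
          hM₂le _ _ _ _ ⟨norm_nonneg _, (hDub t ht x hx).1⟩ ⟨norm_nonneg _, (hDub s hs y hy).1⟩
            (hΛ t ht t ht) (hΛ t ht t ht)
        have f1 : ‖Du t x - Du s y‖ ^ βc
            ≤ Ku ^ βc * (|t - s| ^ (αc * βc / 2) + ‖x - y‖ ^ (αc * βc)) := by
          calc ‖Du t x - Du s y‖ ^ βc
              ≤ (Ku * (|t - s| ^ (αc / 2) + ‖x - y‖ ^ αc)) ^ βc :=
                Real.rpow_le_rpow (norm_nonneg _) (hDuH t ht s hs x hx y hy) hβ0.le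
            _ = Ku ^ βc * ((|t - s| ^ (αc / 2) + ‖x - y‖ ^ αc)) ^ βc :=
                Real.mul_rpow hKu (by positivity)
            _ ≤ Ku ^ βc * ((|t - s| ^ (αc / 2)) ^ βc + (‖x - y‖ ^ αc) ^ βc) := by
                refine mul_le_mul_of_nonneg_left ?_ hP0
                exact Stmt14Aux.rpow_add_le (by positivity) (by positivity) hβ0.le hβ1.le
            _ = Ku ^ βc * (|t - s| ^ (αc * βc / 2) + ‖x - y‖ ^ (αc * βc)) := by
                rw [eT, eX]
        have f2 : ‖x - y‖ ^ βc ≤ CΩ * ‖x - y‖ ^ (αc * βc) := by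
          have hsplit : βc = αc * βc + βc * (1 - αc) := by ring
          calc ‖x - y‖ ^ βc = ‖x - y‖ ^ (αc * βc + βc * (1 - αc)) := by rw [← hsplit]
            _ ≤ CΩ * ‖x - y‖ ^ (αc * βc) :=
              Stmt14Aux.rpow_split (norm_nonneg _) (hdiam x hx y hy)
                (mul_nonneg hα0.le hβ0.le) (mul_pos hβ0 (by linarith))
        have f3 : |t - s| ^ (βc / 2) ≤ CT * |t - s| ^ (αc * βc / 2) := by
          have hsplit : βc / 2 = αc * βc / 2 + βc * (1 - αc) / 2 := by ring
          calc |t - s| ^ (βc / 2)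
              = |t - s| ^ (αc * βc / 2 + βc * (1 - αc) / 2) := by rw [← hsplit]
            _ ≤ CT * |t - s| ^ (αc * βc / 2) :=
              Stmt14Aux.rpow_split (abs_nonneg _) htsT
                (div_nonneg (mul_nonneg hα0.le hβ0.le) (by norm_num))
                (div_pos (mul_pos hβ0 (by linarith)) (by norm_num))
        have hb0 : 0 ≤ Ku ^ βc * (|t - s| ^ (αc * βc / 2) + ‖x - y‖ ^ (αc * βc))
            + CT * |t - s| ^ (αc * βc / 2) + CΩ * ‖x - y‖ ^ (αc * βc) := by
          have g1 := mul_nonneg hP0 (add_nonneg hdT0 hdX0)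
          have g2 := mul_nonneg hCT0 hdT0
          have g3 := mul_nonneg hCΩ0 hdX0
          linarith
        refine mul_le_mul ?_ hξle (hξ₂pos _ _ _ _) hb0
        linarith [f1, f2, f3]
      have hT2 : ‖DpH s y (Du s y) (MFG.pushfwd (MFG.densMeas Ω (m t)) (h t))
            - DpH s y (Du s y) (MFG.pushfwd (MFG.densMeas Ω (m t)) (h s))‖ ≤ L₁ * Sts := by
        refine le_trans (hLip s y (Du s y) (MFG.densMeas Ω (m t)) (hρ1 t ht) (hρc t)
          (h t) (h s) (hhslice t ht) (hhslice s hs) ⟨Bh, hhb t ht⟩ ⟨Bh, hhb s hs⟩) ?_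
        refine mul_le_mul_of_nonneg_left ?_ hL0.le
        exact Stmt14Aux.lq_bound hq₀ _ (closure Ω) (hρ1 t ht) (hρc t) _ hSts0
          (fun z hz => hStsle z hz)
      have hT3 : ‖DpH s y (Du s y) (MFG.pushfwd (MFG.densMeas Ω (m t)) (h s))
            - DpH s y (Du s y) (MFG.pushfwd (MFG.densMeas Ω (m s)) (h s))‖
          ≤ CV * Km ^ βc * |t - s| ^ (αc * βc / 2) * M₁ := by
        refine le_trans (hρHold s y (Du s y) (h s) (MFG.densMeas Ω (m t))
          (MFG.densMeas Ω (m s)) (hρ1 t ht) (hρ1 s hs) (hρc t) (hρc s)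
          (hhslice s hs) ⟨Bh, hhb s hs⟩) ?_
        have hδ0 : 0 ≤ Km * |t - s| ^ (αc / 2) :=
          mul_nonneg hKm (Real.rpow_nonneg (abs_nonneg _) _)
        have hd := Stmt14Aux.dstarX_bounds Ω hΩo hΩb (m t) (m s) (hmslice t ht) (hmslice s hs)
          hKm (fun x hx => (hmb t ht x hx).2) (fun x hx => (hmb s hs x hx).2)
          (fun x hx => (hmb t ht x hx).1) (fun x hx => (hmb s hs x hx).1) hδ0
          (fun x hx => by
            simpa [Real.zero_rpow hα0.ne'] using hmH t ht s hs x hx x hx)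
        have hds : MFG.dstarX (MFG.densMeas Ω (m t)) (MFG.densMeas Ω (m s)) ^ βc
            ≤ CV * Km ^ βc * |t - s| ^ (αc * βc / 2) := by
          calc MFG.dstarX (MFG.densMeas Ω (m t)) (MFG.densMeas Ω (m s)) ^ βc
              ≤ ((volume Ω).toReal * (Km * |t - s| ^ (αc / 2))) ^ βc :=
                Real.rpow_le_rpow hd.1 hd.2 hβ0.le
            _ = (volume Ω).toReal ^ βc * (Km ^ βc * (|t - s| ^ (αc / 2)) ^ βc) := by
                rw [Real.mul_rpow ENNReal.toReal_nonneg hδ0,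
                  Real.mul_rpow hKm (Real.rpow_nonneg (abs_nonneg _) _)]
            _ = (volume Ω).toReal ^ βc * (Km ^ βc * |t - s| ^ (αc * βc / 2)) := by rw [eT]
            _ ≤ CV * (Km ^ βc * |t - s| ^ (αc * βc / 2)) := by
                refine mul_le_mul_of_nonneg_right ?_ (mul_nonneg hQ0 hdT0)
                exact Real.rpow_le_rpow ENNReal.toReal_nonneg (le_max_right 1 _) hβ0.le
            _ = CV * Km ^ βc * |t - s| ^ (αc * βc / 2) := by ring
        have hξ1le : ξ₁ ‖Du s y‖ (MFG.supX Ω (fun y => ‖h s y‖)) ≤ M₁ :=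
          hM₁le _ _ ⟨norm_nonneg _, (hDub s hs y hy).1⟩ (hsupX s hs)
        calc MFG.dstarX (MFG.densMeas Ω (m t)) (MFG.densMeas Ω (m s)) ^ βc
              * ξ₁ ‖Du s y‖ (MFG.supX Ω (fun y => ‖h s y‖))
            ≤ (CV * Km ^ βc * |t - s| ^ (αc * βc / 2)) * M₁ :=
              mul_le_mul hds hξ1le (hξ₁pos _ _)
                (mul_nonneg (mul_nonneg hCV0 hQ0) hdT0)
          _ = CV * Km ^ βc * |t - s| ^ (αc * βc / 2) * M₁ := by ring
      linarith [e1, hT1, hT2, hT3]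
    have hGb : Sts ≤ ((Ku ^ βc + CT) * M₂ + CV * Km ^ βc * M₁)
        * |t - s| ^ (αc * βc / 2) / (1 - L₁) := by
      have h1 : Sts ≤ L₁ * Sts
          + ((Ku ^ βc + CT) * M₂ + CV * Km ^ βc * M₁) * |t - s| ^ (αc * βc / 2) := by
        refine Real.sSup_le ?_ ?_
        · rintro r ⟨z, hz, rfl⟩
          have h2 := T23 z hz z hz
          have hzz : ‖z - z‖ ^ (αc * βc) = 0 := by
            simp [Real.zero_rpow (mul_pos hα0 hβ0).ne']
          rw [hzz] at h2
          have heq2 : (Ku ^ βc * (|t - s| ^ (αc * βc / 2) + 0)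
              + CT * |t - s| ^ (αc * βc / 2) + CΩ * 0) * M₂
              + L₁ * Sts + CV * Km ^ βc * |t - s| ^ (αc * βc / 2) * M₁
              = L₁ * Sts + ((Ku ^ βc + CT) * M₂ + CV * Km ^ βc * M₁)
                * |t - s| ^ (αc * βc / 2) := by ring
          rw [heq2] at h2
          exact h2
        · have g1 : 0 ≤ ((Ku ^ βc + CT) * M₂ + CV * Km ^ βc * M₁)
              * |t - s| ^ (αc * βc / 2) :=
            mul_nonneg (add_nonneg (mul_nonneg (add_nonneg hP0 hCT0) hM₂0)
              (mul_nonneg (mul_nonneg hCV0 hQ0) hM₁0)) hdT0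
          have g2 := mul_nonneg hL0.le hSts0
          linarith
      rw [le_div_iff₀ hL']
      linarith [h1]
    intro x hx y hy
    have hdX0 : 0 ≤ ‖x - y‖ ^ (αc * βc) := Real.rpow_nonneg (norm_nonneg _) _
    have hE0 : 0 ≤ |t - s| ^ (αc * βc / 2) + ‖x - y‖ ^ (αc * βc) := add_nonneg hdT0 hdX0
    have h2 := T23 x hx y hy
    have hA0 : 0 ≤ (Ku ^ βc + CΩ + CT) * M₂ + CV * Km ^ βc * M₁ :=
      add_nonneg (mul_nonneg (by linarith) hM₂0) (mul_nonneg (mul_nonneg hCV0 hQ0) hM₁0)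
    have h3 : (Ku ^ βc * (|t - s| ^ (αc * βc / 2) + ‖x - y‖ ^ (αc * βc))
          + CT * |t - s| ^ (αc * βc / 2) + CΩ * ‖x - y‖ ^ (αc * βc)) * M₂
        + CV * Km ^ βc * |t - s| ^ (αc * βc / 2) * M₁
        ≤ ((Ku ^ βc + CΩ + CT) * M₂ + CV * Km ^ βc * M₁)
          * (|t - s| ^ (αc * βc / 2) + ‖x - y‖ ^ (αc * βc)) := by
      have g1 := mul_nonneg (mul_nonneg hCΩ0 hM₂0) hdT0
      have g2 := mul_nonneg (mul_nonneg hCT0 hM₂0) hdX0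
      have g3 := mul_nonneg (mul_nonneg (mul_nonneg hCV0 hQ0) hM₁0) hdX0
      have hdiff : ((Ku ^ βc + CΩ + CT) * M₂ + CV * Km ^ βc * M₁)
            * (|t - s| ^ (αc * βc / 2) + ‖x - y‖ ^ (αc * βc))
          - ((Ku ^ βc * (|t - s| ^ (αc * βc / 2) + ‖x - y‖ ^ (αc * βc))
            + CT * |t - s| ^ (αc * βc / 2) + CΩ * ‖x - y‖ ^ (αc * βc)) * M₂
            + CV * Km ^ βc * |t - s| ^ (αc * βc / 2) * M₁)
          = CΩ * M₂ * |t - s| ^ (αc * βc / 2) + CT * M₂ * ‖x - y‖ ^ (αc * βc)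
            + CV * Km ^ βc * M₁ * ‖x - y‖ ^ (αc * βc) := by ring
      linarith [hdiff]
    have hGA : ((Ku ^ βc + CT) * M₂ + CV * Km ^ βc * M₁) * |t - s| ^ (αc * βc / 2)
        ≤ ((Ku ^ βc + CΩ + CT) * M₂ + CV * Km ^ βc * M₁)
          * (|t - s| ^ (αc * βc / 2) + ‖x - y‖ ^ (αc * βc)) := by
      have g1 := mul_nonneg (mul_nonneg hCΩ0 hM₂0) hdT0
      have g2 := mul_nonneg (mul_nonneg hP0 hM₂0) hdX0
      have g3 := mul_nonneg (mul_nonneg hCΩ0 hM₂0) hdX0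
      have g4 := mul_nonneg (mul_nonneg hCT0 hM₂0) hdX0
      have g5 := mul_nonneg (mul_nonneg (mul_nonneg hCV0 hQ0) hM₁0) hdX0
      have hdiff : ((Ku ^ βc + CΩ + CT) * M₂ + CV * Km ^ βc * M₁)
            * (|t - s| ^ (αc * βc / 2) + ‖x - y‖ ^ (αc * βc))
          - ((Ku ^ βc + CT) * M₂ + CV * Km ^ βc * M₁) * |t - s| ^ (αc * βc / 2)
          = CΩ * M₂ * |t - s| ^ (αc * βc / 2)
            + Ku ^ βc * M₂ * ‖x - y‖ ^ (αc * βc)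
            + CΩ * M₂ * ‖x - y‖ ^ (αc * βc)
            + CT * M₂ * ‖x - y‖ ^ (αc * βc)
            + CV * Km ^ βc * M₁ * ‖x - y‖ ^ (αc * βc) := by ring
      linarith [hdiff]
    have h4 : L₁ * Sts ≤ L₁ * (((Ku ^ βc + CΩ + CT) * M₂ + CV * Km ^ βc * M₁)
        * (|t - s| ^ (αc * βc / 2) + ‖x - y‖ ^ (αc * βc)) / (1 - L₁)) := by
      refine mul_le_mul_of_nonneg_left (hGb.trans ?_) hL0.le
      exact (div_le_div_iff_of_pos_right hL').2 hGA
    have h5 : ‖h t x - h s y‖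
        ≤ ((Ku ^ βc + CΩ + CT) * M₂ + CV * Km ^ βc * M₁)
            * (|t - s| ^ (αc * βc / 2) + ‖x - y‖ ^ (αc * βc))
          + L₁ * (((Ku ^ βc + CΩ + CT) * M₂ + CV * Km ^ βc * M₁)
            * (|t - s| ^ (αc * βc / 2) + ‖x - y‖ ^ (αc * βc)) / (1 - L₁)) := by
      linarith [h2, h3, h4]
    have h6 : ((Ku ^ βc + CΩ + CT) * M₂ + CV * Km ^ βc * M₁)
            * (|t - s| ^ (αc * βc / 2) + ‖x - y‖ ^ (αc * βc))
          + L₁ * (((Ku ^ βc + CΩ + CT) * M₂ + CV * Km ^ βc * M₁)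
            * (|t - s| ^ (αc * βc / 2) + ‖x - y‖ ^ (αc * βc)) / (1 - L₁))
        = ((Ku ^ βc + CΩ + CT) * M₂ + CV * Km ^ βc * M₁)
            * (|t - s| ^ (αc * βc / 2) + ‖x - y‖ ^ (αc * βc)) / (1 - L₁) := by
      field_simp
      ring
    have hAN : (Ku ^ βc + CΩ + CT) * M₂ + CV * Km ^ βc * M₁
        ≤ N * (Ku ^ βc + Km ^ βc + 1) := by
      rw [hNdef]
      have g1 := mul_nonneg hM₂0 hQ0
      have g2 := mul_nonneg (mul_nonneg hM₂0 hCΩ0) hP0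
      have g3 := mul_nonneg (mul_nonneg hM₂0 hCΩ0) hQ0
      have g4 := mul_nonneg (mul_nonneg hM₂0 hCT0) hP0
      have g5 := mul_nonneg (mul_nonneg hM₂0 hCT0) hQ0
      have g6 := mul_nonneg (mul_nonneg hM₁0 hCV0) hP0
      have g7 := mul_nonneg hM₁0 hCV0
      have g8 := mul_nonneg hBh hP0
      have g9 := mul_nonneg hBh hQ0
      have hdiff : (M₂ * (1 + CΩ + CT) + M₁ * CV + Bh + 1) * (Ku ^ βc + Km ^ βc + 1)
          - ((Ku ^ βc + CΩ + CT) * M₂ + CV * Km ^ βc * M₁)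
          = M₂ * Km ^ βc + M₂ + M₂ * CΩ * Ku ^ βc + M₂ * CΩ * Km ^ βc
            + M₂ * CT * Ku ^ βc + M₂ * CT * Km ^ βc + M₁ * CV * Ku ^ βc + M₁ * CV
            + Bh * Ku ^ βc + Bh * Km ^ βc + Bh + Ku ^ βc + Km ^ βc + 1 := by ring
      linarith [hdiff]
    calc ‖h t x - h s y‖
        ≤ ((Ku ^ βc + CΩ + CT) * M₂ + CV * Km ^ βc * M₁)
            * (|t - s| ^ (αc * βc / 2) + ‖x - y‖ ^ (αc * βc)) / (1 - L₁) := by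
          rw [← h6]; exact h5
      _ ≤ N * (Ku ^ βc + Km ^ βc + 1)
            * (|t - s| ^ (αc * βc / 2) + ‖x - y‖ ^ (αc * βc)) / (1 - L₁) :=
          (div_le_div_iff_of_pos_right hL').2 (mul_le_mul_of_nonneg_right hAN hE0)
      _ = N / (1 - L₁) * (Ku ^ βc + Km ^ βc + 1)
            * (|t - s| ^ (αc * βc / 2) + ‖x - y‖ ^ (αc * βc)) := by ring
  constructor
  · intro t ht x hx
    have h1 : ‖h t x‖ ≤ Bh := hhb t ht x hx
    have hBhN : Bh ≤ N := by
      have g1 : 0 ≤ M₂ * (1 + CΩ + CT) := mul_nonneg hM₂0 (by linarith)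
      have g2 : 0 ≤ M₁ * CV := mul_nonneg hM₁0 hCV0
      rw [hNdef]; linarith
    have hC1 : N ≤ N / (1 - L₁) := by
      rw [le_div_iff₀ hL']
      linarith [mul_nonneg hN0.le hL0.le]
    calc ‖h t x‖ ≤ Bh := h1
      _ ≤ N / (1 - L₁) := le_trans hBhN hC1
      _ ≤ N / (1 - L₁) * (Ku ^ βc + Km ^ βc + 1) :=
          le_mul_of_one_le_right (le_of_lt (div_pos hN0 hL')) hone
  · exact key
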